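/- Let a, b ∈ ℝ^n with a ≠ 0. If ⟨b,a⟩/‖b‖₂ > |⟨x,a⟩|/‖x‖₂ for a nonzero x ∈ ℝ^n, then max over r with ⟨a, r + b⟩ ≤ 0 and ‖r‖₂² ≤ ‖b‖₂² of ⟨x, r⟩ equals ‖x^⊥‖₂ √(‖b‖₂² - ⟨b,a⟩²/‖a‖₂²) - ⟨a,b⟩⟨x,a⟩/‖a‖₂², where x^⊥ = x - a⟨x,a⟩/‖a‖₂². -/

import Mathlib

open RealInnerProductSpace

section Aux
variable {F : Type*} [NormedAddCommGroup F] [InnerProductSpace ℝ F]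

lemma aux_inner_aw (a x : F) (ha : a ≠ 0) :
    ⟪a, x - (⟪x, a⟫ / ‖a‖^2) • a⟫ = 0 := by
  have hna : (0:ℝ) < ‖a‖ := norm_pos_iff.mpr ha
  rw [inner_sub_right, real_inner_smul_right, real_inner_self_eq_norm_sq,
    real_inner_comm a x]
  field_simp; ring

lemma aux_norm_w_sq (a x : F) (ha : a ≠ 0) :
    ‖x - (⟪x, a⟫ / ‖a‖^2) • a‖^2 = ‖x‖^2 - ⟪x, a⟫^2 / ‖a‖^2 := by
  have hna : (0:ℝ) < ‖a‖ := norm_pos_iff.mpr ha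
  rw [← real_inner_self_eq_norm_sq]
  rw [inner_sub_left, inner_sub_right, inner_sub_right, real_inner_smul_left,
    real_inner_smul_left, real_inner_smul_right, real_inner_smul_right,
    real_inner_self_eq_norm_sq, real_inner_self_eq_norm_sq, real_inner_comm a x]
  field_simp; ring

lemma aux_inner_xw (a x : F) (ha : a ≠ 0) :
    ⟪x, x - (⟪x, a⟫ / ‖a‖^2) • a⟫ = ‖x‖^2 - ⟪x, a⟫^2 / ‖a‖^2 := by
  have hna : (0:ℝ) < ‖a‖ := norm_pos_iff.mpr ha
  rw [inner_sub_right, real_inner_smul_right, real_inner_self_eq_norm_sq]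
  field_simp

lemma aux_inner_wq (a x r : F) (ha : a ≠ 0) :
    ⟪x - (⟪x, a⟫ / ‖a‖^2) • a, r - (⟪r, a⟫ / ‖a‖^2) • a⟫
      = ⟪x, r⟫ - ⟪x, a⟫ * ⟪r, a⟫ / ‖a‖^2 := by
  have hna : (0:ℝ) < ‖a‖ := norm_pos_iff.mpr ha
  rw [inner_sub_left, inner_sub_right, inner_sub_right, real_inner_smul_left,
    real_inner_smul_left, real_inner_smul_right, real_inner_smul_right,
    real_inner_self_eq_norm_sq, real_inner_comm a x, real_inner_comm a r]
  field_simp; ring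
end Aux

lemma aux_sq_le_of_abs_le {u m : ℝ} (h : |u| ≤ m) : u^2 ≤ m^2 := by
  nlinarith [sq_abs u, abs_nonneg u]

lemma aux_sq_lt_of_abs_mul_lt {s bb c xx : ℝ} (h : |s| * bb < c * xx)
    (hbb : 0 ≤ bb) : s^2 * bb^2 < c^2 * xx^2 := by
  nlinarith [sq_abs s, abs_nonneg s, mul_nonneg (abs_nonneg s) hbb,
    sq_nonneg (c*xx - |s| * bb), sq_nonneg (c*xx + |s| * bb)]

lemma aux_le_of_sq_le_sq {u v : ℝ} (hu : 0 ≤ u) (hv : 0 ≤ v) (h : u^2 ≤ v^2) :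
    u ≤ v := by nlinarith

lemma aux_pos_of_sq_pos {u : ℝ} (hu : 0 ≤ u) (h : 0 < u^2) : 0 < u := by nlinarith

lemma aux_cancel_lt {s2 B2 c2 A2 X2 : ℝ} (h1 : s2*B2 < c2*X2) (h2 : c2 ≤ A2*B2)
    (hB2 : 0 < B2) (hX2 : 0 ≤ X2) : s2 < A2*X2 := by
  nlinarith [mul_le_mul_of_nonneg_right h2 hX2]

lemma aux_core (A B p c s t D E : ℝ) (hA : 0 < A) (hp : 0 < p) (hc : 0 < c)
    (ht : t ≤ -c) (hD0 : 0 ≤ D) (hE0 : 0 ≤ E)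
    (hAD2 : A*D^2 = A*B - c^2) (hAE2 : A*E^2 = A*B - t^2)
    (hkey' : s^2*B*A < c^2*p^2*A + c^2*s^2) :
    p*E + s*t/A ≤ p*D - c*s/A := by
  have htc : c^2 ≤ t^2 := by nlinarith
  have K1 : |s| * D ≤ p * c := by
    have e0 : s^2*D^2*A = s^2*(A*B - c^2) := by linear_combination s^2*hAD2
    have e1 : s^2*(A*B - c^2) < p^2*c^2*A := by nlinarith [hkey']
    have e5 : s^2*D^2 < p^2*c^2 := by
      have h := e0.trans_lt e1
      exact lt_of_mul_lt_mul_right (by linarith) hA.le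
    have hsq : (|s| * D)^2 < (p*c)^2 := by
      rw [mul_pow, sq_abs, mul_pow]; exact e5
    exact le_of_lt (lt_of_pow_lt_pow_left₀ 2 (mul_nonneg hp.le hc.le) hsq)
  have K2 : |s| * E ≤ p * (-t) := by
    have e0 : s^2*E^2*A = s^2*(A*B - t^2) := by linear_combination s^2*hAE2
    have e2 : s^2*(A*B - t^2) ≤ s^2*(A*B - c^2) :=
      mul_le_mul_of_nonneg_left (by linarith) (sq_nonneg s)
    have e1 : s^2*(A*B - c^2) < p^2*c^2*A := by nlinarith [hkey']
    have e3 : p^2*c^2*A ≤ p^2*t^2*A :=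
      mul_le_mul_of_nonneg_right (mul_le_mul_of_nonneg_left htc (sq_nonneg p)) hA.le
    have e5 : s^2*E^2 < p^2*t^2 := by
      have h : s^2*E^2*A < p^2*t^2*A := by linarith
      exact lt_of_mul_lt_mul_right h hA.le
    have hsq : (|s| * E)^2 < (p*(-t))^2 := by
      have h7 : (p*(-t))^2 = p^2*t^2 := by ring
      rw [h7, mul_pow, sq_abs]; exact e5
    have hpt : (0:ℝ) ≤ p*(-t) := mul_nonneg hp.le (by linarith)
    exact le_of_lt (lt_of_pow_lt_pow_left₀ 2 hpt hsq)
  have hmul : A*p*E + s*t ≤ A*p*D - c*s := by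
    rcases eq_or_lt_of_le (add_nonneg hD0 hE0) with hDE | hDE
    · have hDz : D = 0 := by linarith
      have hEz : E = 0 := by linarith
      rw [hDz] at hAD2; rw [hEz] at hAE2
      simp at hAD2 hAE2
      have ht2 : t^2 = c^2 := by linarith
      have htm : t = -c := by nlinarith [sq_nonneg (t+c)]
      exact le_of_eq (by rw [hDz, hEz, htm]; ring)
    · have hfac1 : (0:ℝ) ≤ -(t+c) := by linarith
      have hfac2 : (0:ℝ) ≤ p*(c-t) + s*(D+E) := by
        have h1 : -(s*D) ≤ |s| * D := by nlinarith [neg_le_abs s, hD0]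
        have h2 : -(s*E) ≤ |s| * E := by nlinarith [neg_le_abs s, hE0]
        nlinarith
      have hprod : 0 ≤ (A*p*D - c*s - (A*p*E + s*t)) * (D+E) := by
        have hexp : (A*p*D - c*s - (A*p*E + s*t)) * (D+E)
            = (-(t+c)) * (p*(c-t) + s*(D+E)) := by
          linear_combination p*hAD2 - p*hAE2
        rw [hexp]; exact mul_nonneg hfac1 hfac2
      nlinarith [hprod, hDE]
  have hnum : 0 ≤ A*p*D - c*s - (A*p*E + s*t) := by linarith
  have hgoal : p*D - c*s/A - (p*E + s*t/A) = (A*p*D - c*s - (A*p*E + s*t))/A := by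
    field_simp
  have h9 : 0 ≤ p*D - c*s/A - (p*E + s*t/A) := by
    rw [hgoal]; exact div_nonneg hnum hA.le
  linarith

theorem stmt_11 {n : ℕ} (a b x : EuclideanSpace ℝ (Fin n))
    (ha : a ≠ 0) (hb : b ≠ 0) (hab : ⟪a, b⟫ ≥ 0) (hx : x ≠ 0)
    (hangle : ⟪b, a⟫ / ‖b‖ > |(⟪x, a⟫)| / ‖x‖) :
    IsGreatest {v : ℝ | ∃ r : EuclideanSpace ℝ (Fin n),
        ⟪a, r + b⟫ ≤ 0 ∧ ‖r‖ ^ 2 ≤ ‖b‖ ^ 2 ∧ v = ⟪x, r⟫}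
      (‖x - (⟪x, a⟫ / ‖a‖ ^ 2) • a‖ * Real.sqrt (‖b‖ ^ 2 - ⟪b, a⟫ ^ 2 / ‖a‖ ^ 2)
        - ⟪a, b⟫ * ⟪x, a⟫ / ‖a‖ ^ 2) := by
  have hna : (0:ℝ) < ‖a‖ := norm_pos_iff.mpr ha
  have hnb : (0:ℝ) < ‖b‖ := norm_pos_iff.mpr hb
  have hnx : (0:ℝ) < ‖x‖ := norm_pos_iff.mpr hx
  have hA : (0:ℝ) < ‖a‖^2 := by positivity
  have hba : ⟪b, a⟫ = ⟪a, b⟫ := real_inner_comm a b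
  rw [hba] at hangle ⊢
  have hc : (0:ℝ) < ⟪a, b⟫ := by
    have h0 : (0:ℝ) ≤ |(⟪x, a⟫)| / ‖x‖ := by positivity
    have h1 : (0:ℝ) < ⟪a, b⟫ / ‖b‖ := lt_of_le_of_lt h0 hangle
    rcases div_pos_iff.mp h1 with ⟨h, _⟩ | ⟨_, h⟩
    · exact h
    · linarith
  have hsx : |(⟪x, a⟫)| * ‖b‖ < ⟪a, b⟫ * ‖x‖ := (div_lt_div_iff₀ hnx hnb).mp hangle
  have hkey0 : ⟪x, a⟫^2 * ‖b‖^2 < ⟪a, b⟫^2 * ‖x‖^2 := aux_sq_lt_of_abs_mul_lt hsx hnb.le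
  have hcAB : ⟪a, b⟫^2 ≤ ‖a‖^2 * ‖b‖^2 := by
    have h := aux_sq_le_of_abs_le (abs_real_inner_le_norm a b)
    rw [mul_pow] at h; exact h
  have hw2 : ‖x - (⟪x, a⟫ / ‖a‖^2) • a‖^2 = ‖x‖^2 - ⟪x, a⟫^2 / ‖a‖^2 :=
    aux_norm_w_sq a x ha
  have hs2 : ⟪x, a⟫^2 < ‖a‖^2 * ‖x‖^2 :=
    aux_cancel_lt hkey0 hcAB (by positivity) (sq_nonneg ‖x‖)
  have hp : (0:ℝ) < ‖x - (⟪x, a⟫ / ‖a‖^2) • a‖ := by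
    refine aux_pos_of_sq_pos (norm_nonneg _) ?_
    rw [hw2, sub_pos, div_lt_iff₀ hA]
    linarith [hs2]
  have hBc : (0:ℝ) ≤ ‖b‖^2 - ⟪a, b⟫^2 / ‖a‖^2 := by
    rw [sub_nonneg, div_le_iff₀ hA]; linarith [hcAB]
  have hD2 : (Real.sqrt (‖b‖^2 - ⟪a, b⟫^2 / ‖a‖^2))^2 = ‖b‖^2 - ⟪a, b⟫^2 / ‖a‖^2 :=
    Real.sq_sqrt hBc
  have hD0 : (0:ℝ) ≤ Real.sqrt (‖b‖^2 - ⟪a, b⟫^2 / ‖a‖^2) := Real.sqrt_nonneg _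
  set w := x - (⟪x, a⟫ / ‖a‖^2) • a with hwdef
  set D := Real.sqrt (‖b‖^2 - ⟪a, b⟫^2 / ‖a‖^2) with hDdef
  have haw : ⟪a, w⟫ = 0 := by rw [hwdef]; exact aux_inner_aw a x ha
  have hwa : ⟪w, a⟫ = 0 := by rw [real_inner_comm a w]; exact haw
  have hxw : ⟪x, w⟫ = ‖w‖^2 := by
    rw [hwdef, aux_inner_xw a x ha, ← hw2]
  constructor
  · -- membership
    refine ⟨(D / ‖w‖) • w - (⟪a, b⟫ / ‖a‖^2) • a, ?_, ?_, ?_⟩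
    · rw [inner_add_right, inner_sub_right, real_inner_smul_right,
        real_inner_smul_right, haw, real_inner_self_eq_norm_sq]
      have h9 : D / ‖w‖ * 0 - ⟪a, b⟫ / ‖a‖^2 * ‖a‖^2 + ⟪a, b⟫ = 0 := by
        field_simp; ring
      linarith [h9]
    · have hu2 : ‖(D / ‖w‖) • w‖^2 = (D / ‖w‖)^2 * ‖w‖^2 := by
        rw [norm_smul, Real.norm_eq_abs, mul_pow, sq_abs]
      have hv2 : ‖(⟪a, b⟫ / ‖a‖^2) • a‖^2 = (⟪a, b⟫ / ‖a‖^2)^2 * ‖a‖^2 := by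
        rw [norm_smul, Real.norm_eq_abs, mul_pow, sq_abs]
      have huv : ⟪(D / ‖w‖) • w, (⟪a, b⟫ / ‖a‖^2) • a⟫ = 0 := by
        rw [real_inner_smul_left, real_inner_smul_right, hwa]; ring
      have hval : ‖(D / ‖w‖) • w - (⟪a, b⟫ / ‖a‖^2) • a‖^2 = ‖b‖^2 := by
        rw [norm_sub_sq_real, hu2, hv2, huv]
        have h9 : (D / ‖w‖)^2 * ‖w‖^2 - 2*0 + (⟪a, b⟫ / ‖a‖^2)^2 * ‖a‖^2
            = D^2 + ⟪a, b⟫^2 / ‖a‖^2 := by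
          field_simp; ring
        rw [h9, hD2]; ring
      rw [hval]
    · rw [inner_sub_right, real_inner_smul_right, real_inner_smul_right, hxw]
      field_simp
  · -- upper bound
    rintro v ⟨r, h1, h2, rfl⟩
    have ht : ⟪r, a⟫ ≤ -⟪a, b⟫ := by
      rw [inner_add_right] at h1
      rw [real_inner_comm a r]; linarith [h1]
    have hrb : ‖r‖ ≤ ‖b‖ := aux_le_of_sq_le_sq (norm_nonneg r) (norm_nonneg b) h2
    have htAB : ⟪r, a⟫^2 ≤ ‖a‖^2 * ‖b‖^2 := by
      have h3 : |(⟪r, a⟫)| ≤ ‖r‖ * ‖a‖ := abs_real_inner_le_norm r a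
      have h4 : ‖r‖ * ‖a‖ ≤ ‖b‖ * ‖a‖ := mul_le_mul_of_nonneg_right hrb hna.le
      have h5 := aux_sq_le_of_abs_le (h3.trans h4)
      rw [mul_pow] at h5; linarith [h5]
    have hBt : (0:ℝ) ≤ ‖b‖^2 - ⟪r, a⟫^2 / ‖a‖^2 := by
      rw [sub_nonneg, div_le_iff₀ hA]; linarith [htAB]
    have hE2 : (Real.sqrt (‖b‖^2 - ⟪r, a⟫^2 / ‖a‖^2))^2 = ‖b‖^2 - ⟪r, a⟫^2 / ‖a‖^2 :=
      Real.sq_sqrt hBt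
    set E := Real.sqrt (‖b‖^2 - ⟪r, a⟫^2 / ‖a‖^2) with hEdef
    have hE0 : (0:ℝ) ≤ E := by rw [hEdef]; exact Real.sqrt_nonneg _
    have hq2 : ‖r - (⟪r, a⟫ / ‖a‖^2) • a‖^2 = ‖r‖^2 - ⟪r, a⟫^2 / ‖a‖^2 :=
      aux_norm_w_sq a r ha
    have hwq : ⟪w, r - (⟪r, a⟫ / ‖a‖^2) • a⟫ = ⟪x, r⟫ - ⟪x, a⟫ * ⟪r, a⟫ / ‖a‖^2 := by
      rw [hwdef]; exact aux_inner_wq a x r ha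
    have hqE : ‖r - (⟪r, a⟫ / ‖a‖^2) • a‖ ≤ E := by
      refine aux_le_of_sq_le_sq (norm_nonneg _) hE0 ?_
      rw [hq2, hE2]; linarith [h2]
    have hstep1 : ⟪x, r⟫ ≤ ‖w‖ * E + ⟪x, a⟫ * ⟪r, a⟫ / ‖a‖^2 := by
      have h6 := real_inner_le_norm w (r - (⟪r, a⟫ / ‖a‖^2) • a)
      rw [hwq] at h6
      have h7 : ‖w‖ * ‖r - (⟪r, a⟫ / ‖a‖^2) • a‖ ≤ ‖w‖ * E :=
        mul_le_mul_of_nonneg_left hqE (norm_nonneg w)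
      linarith [h6, h7]
    have hx2 : ‖x‖^2 = ‖w‖^2 + ⟪x, a⟫^2 / ‖a‖^2 := by
      rw [hw2]; ring
    have hkey' : ⟪x, a⟫^2 * ‖b‖^2 * ‖a‖^2
        < ⟪a, b⟫^2 * ‖w‖^2 * ‖a‖^2 + ⟪a, b⟫^2 * ⟪x, a⟫^2 := by
      have h5 := hkey0
      rw [hx2] at h5
      have h6 := mul_lt_mul_of_pos_right h5 hA
      have h7 : ⟪a, b⟫^2 * (‖w‖^2 + ⟪x, a⟫^2 / ‖a‖^2) * ‖a‖^2
          = ⟪a, b⟫^2 * ‖w‖^2 * ‖a‖^2 + ⟪a, b⟫^2 * ⟪x, a⟫^2 := by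
        field_simp
      rw [h7] at h6
      linarith [h6]
    have hcore := aux_core (‖a‖^2) (‖b‖^2) (‖w‖) (⟪a, b⟫) (⟪x, a⟫) (⟪r, a⟫) D E
      hA hp hc ht hD0 hE0
      (by rw [hDdef, hD2]; field_simp) (by rw [hEdef, hE2]; field_simp) hkey'
    calc ⟪x, r⟫ ≤ ‖w‖ * E + ⟪x, a⟫ * ⟪r, a⟫ / ‖a‖^2 := hstep1
      _ ≤ ‖w‖ * D - ⟪a, b⟫ * ⟪x, a⟫ / ‖a‖^2 := by linarith [hcore]
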